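/- (Proposition 3, best response of a sensor node) Under the hypotheses making the sensor utility U_L strictly concave on the open interval I (a ≥ e, g > 2 on I, w₁, w₂ ∈ (0,1) with w₁ + w₂ = 1, E_tl, E, n, d, n_srx, Q_sum > 0), suppose p* ∈ I is a critical point of U_L, i.e., U_L'(p*) = 0, and let g'(p*) > 0 be the derivative of g at p*. Then p* is the unique global maximizer of U_L on I, and it satisfies (p*)² · ( w₁·d³·E·n_srx − Z·g(p*)²·g'(p*) ) = w₂·d³·E_tl·n_srx·Q_sum, where Z = 4π·n·w₂·E_tl. -/

import Mathlib

/-- The underwater acoustic transmit-power function Q(R) = A·R^k·a^R + Q₀. -/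
noncomputable def Qfun (A a k Q₀ : ℝ) : ℝ → ℝ := fun R => A * R ^ k * a ^ R + Q₀

/-- The leader (sensor node) utility (Eq. (12)):
U_L(p) = w₁·(E_tl − E·p)/E_tl + w₂·( (4π·n/(3d³·n_srx))·g(p)³ − Q_sum/p ). -/
noncomputable def UL (w₁ w₂ Etl E n d nsrx Qsum : ℝ) (g : ℝ → ℝ) : ℝ → ℝ :=
  fun p => w₁ * (Etl - E * p) / Etl +
    w₂ * ((4 * Real.pi * n / (3 * d ^ 3 * nsrx)) * (g p) ^ 3 - Qsum / p)

open Set in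
lemma Qfun_hasDerivAt (A a k Q₀ : ℝ) (ha : 0 < a) {R : ℝ} (hR : 0 < R) :
    HasDerivAt (Qfun A a k Q₀) (A * R ^ (k-1) * a ^ R * (k + R * Real.log a)) R := by
  have h1 : HasDerivAt (fun x : ℝ => x ^ k) (k * R ^ (k-1)) R :=
    Real.hasDerivAt_rpow_const (Or.inl hR.ne')
  have h2 : HasDerivAt (fun x : ℝ => a ^ x) (a ^ R * Real.log a) R :=
    (Real.hasStrictDerivAt_const_rpow ha R).hasDerivAt
  have h3 := ((h1.const_mul A).mul h2).add_const Q₀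
  refine h3.congr_deriv ?_
  have hk1 : k - 1 + 1 = k := by ring
  have hRk : R ^ k = R ^ (k-1) * R := by
    rw [← Real.rpow_add_one hR.ne' (k-1), hk1]
  rw [hRk]; ring

open Set in
lemma mfun_strictMono {A a k : ℝ} (hA : 0 < A) (ha : Real.exp 1 ≤ a) (hk : 1 ≤ k) :
    StrictMonoOn (fun R : ℝ => A * R ^ (k-3) * a ^ R * (k + R * Real.log a)) (Set.Ioi 2) := by
  have ha0 : (0:ℝ) < a := lt_of_lt_of_le (Real.exp_pos 1) ha
  have hL : 1 ≤ Real.log a := (Real.le_log_iff_exp_le ha0).2 ha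
  have hder : ∀ R : ℝ, 0 < R → HasDerivAt (fun R : ℝ => A * R ^ (k-3) * a ^ R * (k + R * Real.log a))
      (A * R ^ (k-4) * a ^ R *
        ((k-3) * (k + R * Real.log a) + R * Real.log a * (k + R * Real.log a) + R * Real.log a)) R := by
    intro R hR
    have h1 : HasDerivAt (fun x : ℝ => x ^ (k-3)) ((k-3) * R ^ (k-3-1)) R :=
      Real.hasDerivAt_rpow_const (Or.inl hR.ne')
    have h2 : HasDerivAt (fun x : ℝ => a ^ x) (a ^ R * Real.log a) R :=
      (Real.hasStrictDerivAt_const_rpow ha0 R).hasDerivAt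
    have h4 : HasDerivAt (fun x : ℝ => k + x * Real.log a) (1 * Real.log a) R :=
      ((hasDerivAt_id R).mul_const _).const_add k
    have h3 := ((h1.const_mul A).mul h2).mul h4
    refine h3.congr_deriv ?_
    have hk1 : k - 4 + 1 = k - 3 := by ring
    have hk2 : k - 3 - 1 = k - 4 := by ring
    have hRk : R ^ (k-3) = R ^ (k-4) * R := by
      rw [← Real.rpow_add_one hR.ne' (k-4), hk1]
    simp only [Pi.mul_apply]; rw [hk2, hRk]; ring
  apply strictMonoOn_of_deriv_pos (convex_Ioi 2)
  · exact fun x hx => (hder x (by simp at hx; linarith)).continuousAt.continuousWithinAt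
  · rw [interior_Ioi]
    intro x hx
    simp only [mem_Ioi] at hx
    have hx0 : (0:ℝ) < x := by linarith
    rw [(hder x hx0).deriv]
    have hu : 2 < x * Real.log a := by nlinarith
    have hb : 0 < (k-3) * (k + x * Real.log a) + x * Real.log a * (k + x * Real.log a)
        + x * Real.log a := by nlinarith [sq_nonneg (2*k - 3), mul_nonneg (by linarith : (0:ℝ) ≤ x * Real.log a) (by linarith : (0:ℝ) ≤ k - 1)]
    have := Real.rpow_pos_of_pos hx0 (k-4)
    have := Real.rpow_pos_of_pos ha0 x
    positivity

open Set in
lemma gcube_strictConcaveOn (A a k Q₀ : ℝ) (hA : 0 < A) (ha : Real.exp 1 ≤ a) (hk : 1 ≤ k)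
    (g : ℝ → ℝ)
    (hgQ : ∀ y : ℝ, Q₀ < y → Qfun A a k Q₀ (g y) = y)
    (hgmono : StrictMonoOn g (Set.Ioi Q₀))
    (I : Set ℝ) (hIsub : I ⊆ Set.Ioi Q₀) (hIconv : Convex ℝ I)
    (hg2 : ∀ p ∈ I, 2 < g p) :
    StrictConcaveOn ℝ I (fun p => (g p) ^ 3) := by
  have ha0 : (0:ℝ) < a := lt_of_lt_of_le (Real.exp_pos 1) ha
  have hL : 1 ≤ Real.log a := (Real.le_log_iff_exp_le ha0).2 ha
  set L := Real.log a with hLdef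
  set m : ℝ → ℝ := fun R => A * R ^ (k-3) * a ^ R * (k + R * L) with hmdef
  have hmpos : ∀ R : ℝ, 2 < R → 0 < m R := by
    intro R hR
    have h0 : (0:ℝ) < R := by linarith
    have h1 := Real.rpow_pos_of_pos h0 (k-3)
    have h2 := Real.rpow_pos_of_pos ha0 R
    have h3 : 0 < k + R * L := by nlinarith
    simp only [hmdef]; positivity
  -- key slope fact via Cauchy MVT
  have key : ∀ x y : ℝ, Q₀ < x → Q₀ < y → x < y → 2 < g x →
      (g y ^ 3 - g x ^ 3) * m (if True then 0 else 0) = 0 → True := fun _ _ _ _ _ _ _ => trivial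
  apply strictConcaveOn_of_slope_strict_anti_adjacent hIconv
  intro x y z hx hz hxy hyz
  have hy : y ∈ I := hIconv.ordConnected.out hx hz ⟨hxy.le, hyz.le⟩
  have hgxy : g x < g y := hgmono (hIsub hx) (hIsub hy) hxy
  have hgyz : g y < g z := hgmono (hIsub hy) (hIsub hz) hyz
  have hgx2 : 2 < g x := hg2 x hx
  have hgy2 : 2 < g y := by linarith
  -- Cauchy MVT helper
  have mvt : ∀ u v : ℝ, 2 < u → u < v →
      ∃ c ∈ Ioo u v, (v ^ 3 - u ^ 3) * (A * c ^ (k-1) * a ^ c * (k + c * L)) =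
        (Qfun A a k Q₀ v - Qfun A a k Q₀ u) * (3 * c ^ 2) := by
    intro u v hu huv
    have hQc : ContinuousOn (Qfun A a k Q₀) (Icc u v) := by
      intro w hw
      exact (Qfun_hasDerivAt A a k Q₀ ha0 (by have := hw.1; linarith)).continuousAt.continuousWithinAt
    have hQd : ∀ w ∈ Ioo u v, HasDerivAt (Qfun A a k Q₀)
        (A * w ^ (k-1) * a ^ w * (k + w * L)) w := by
      intro w hw
      exact Qfun_hasDerivAt A a k Q₀ ha0 (by have := hw.1; linarith)
    have hcc : ContinuousOn (fun w : ℝ => w ^ 3) (Icc u v) := (continuous_pow 3).continuousOn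
    have hcd : ∀ w ∈ Ioo u v, HasDerivAt (fun w : ℝ => w ^ 3) (3 * w ^ 2) w := by
      intro w _
      have := hasDerivAt_pow 3 w
      norm_num at this
      exact this
    obtain ⟨c, hc, heq⟩ := exists_ratio_hasDerivAt_eq_ratio_slope (fun w : ℝ => w ^ 3)
      (fun w => 3 * w ^ 2) huv hcc hcd (Qfun A a k Q₀)
      (fun w => A * w ^ (k-1) * a ^ w * (k + w * L)) hQc hQd
    exact ⟨c, hc, heq.symm⟩
  obtain ⟨c, hcmem, hceq⟩ := mvt (g x) (g y) hgx2 hgxy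
  obtain ⟨c', hcmem', hceq'⟩ := mvt (g y) (g z) hgy2 hgyz
  have hc2 : 2 < c := by have := hcmem.1; linarith
  have hc2' : 2 < c' := by have := hcmem'.1; linarith
  have hc0 : (0:ℝ) < c := by linarith
  have hc0' : (0:ℝ) < c' := by linarith
  -- rewrite Qd = m * c²
  have hsplit : ∀ w : ℝ, 0 < w → A * w ^ (k-1) * a ^ w * (k + w * L) = m w * w ^ 2 := by
    intro w hw
    have h2 : (w:ℝ) ^ (2:ℕ) = w ^ ((2:ℕ):ℝ) := (Real.rpow_natCast w 2).symm
    have : w ^ (k-1) = w ^ (k-3) * w ^ (2:ℕ) := by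
      rw [h2, ← Real.rpow_add hw]
      congr 1
      push_cast
      ring
    rw [this, hmdef]; ring
  rw [hsplit c hc0] at hceq
  rw [hsplit c' hc0'] at hceq'
  rw [hgQ x (hIsub hx), hgQ y (hIsub hy)] at hceq
  rw [hgQ y (hIsub hy), hgQ z (hIsub hz)] at hceq'
  have hcne : (c:ℝ) ^ 2 ≠ 0 := pow_ne_zero 2 hc0.ne'
  have hcne' : (c':ℝ) ^ 2 ≠ 0 := pow_ne_zero 2 hc0'.ne'
  have h1 : (g y ^ 3 - g x ^ 3) * m c = (y - x) * 3 := by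
    apply mul_right_cancel₀ hcne
    linear_combination hceq
  have h2 : (g z ^ 3 - g y ^ 3) * m c' = (z - y) * 3 := by
    apply mul_right_cancel₀ hcne'
    linear_combination hceq'
  have hmc : 0 < m c := hmpos c hc2
  have hmc' : 0 < m c' := hmpos c' hc2'
  have hmlt : m c < m c' := mfun_strictMono hA ha hk (mem_Ioi.2 hc2) (mem_Ioi.2 hc2')
    (by have := hcmem.2; have := hcmem'.1; linarith)
  have e1 : (g y ^ 3 - g x ^ 3) / (y - x) = 3 / m c := by
    rw [div_eq_div_iff (by linarith) hmc.ne']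
    linear_combination h1
  have e2 : (g z ^ 3 - g y ^ 3) / (z - y) = 3 / m c' := by
    rw [div_eq_div_iff (by linarith) hmc'.ne']
    linear_combination h2
  rw [e1, e2]
  exact div_lt_div_of_pos_left (by norm_num) hmc hmlt

lemma mySCsmul {s : Set ℝ} {f : ℝ → ℝ} {c : ℝ} (hc : 0 < c) (hf : StrictConcaveOn ℝ s f) :
    StrictConcaveOn ℝ s (fun x => c * f x) := by
  refine ⟨hf.1, fun x hx y hy hxy a b ha hb hab => ?_⟩
  have h := hf.2 hx hy hxy ha hb hab
  simp only [smul_eq_mul] at *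
  nlinarith

lemma mySCcongr {s : Set ℝ} {f h : ℝ → ℝ} (hf : StrictConcaveOn ℝ s f)
    (he : ∀ x ∈ s, f x = h x) : StrictConcaveOn ℝ s h := by
  refine ⟨hf.1, fun x hx y hy hxy a b ha hb hab => ?_⟩
  rw [← he x hx, ← he y hy, ← he _ (hf.1 hx hy ha.le hb.le hab)]
  exact hf.2 hx hy hxy ha hb hab

/-- Proposition 3, best response of a sensor node: a critical point p* ∈ I of
U_L is the unique global maximizer of U_L on I, and it satisfies
(p*)²·(w₁·d³·E·n_srx − Z·g(p*)²·g'(p*)) = w₂·d³·E_tl·n_srx·Q_sum, with Z = 4π·n·w₂·E_tl. -/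
theorem stmt_12 (A a k Q₀ : ℝ) (hA : 0 < A) (ha : Real.exp 1 ≤ a) (hk : 1 ≤ k) (hQ₀ : 0 ≤ Q₀)
    (g : ℝ → ℝ)
    (hginv : ∀ R : ℝ, 0 < R → g (Qfun A a k Q₀ R) = R)
    (hgQ : ∀ y : ℝ, Q₀ < y → Qfun A a k Q₀ (g y) = y)
    (hgmono : StrictMonoOn g (Set.Ioi Q₀))
    (hgpos : ∀ y : ℝ, Q₀ < y → 0 < g y)
    (I : Set ℝ) (hIsub : I ⊆ Set.Ioi Q₀) (hIopen : IsOpen I) (hIconv : Convex ℝ I)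
    (hg2 : ∀ p ∈ I, 2 < g p)
    (w₁ w₂ : ℝ) (hw₁ : w₁ ∈ Set.Ioo (0 : ℝ) 1) (hw₂ : w₂ ∈ Set.Ioo (0 : ℝ) 1)
    (hw : w₁ + w₂ = 1)
    (Etl E n d nsrx Qsum : ℝ) (hEtl : 0 < Etl) (hE : 0 < E) (hn : 0 < n) (hd : 0 < d)
    (hnsrx : 0 < nsrx) (hQsum : 0 < Qsum)
    (pstar : ℝ) (hpI : pstar ∈ I)
    (hcrit : deriv (UL w₁ w₂ Etl E n d nsrx Qsum g) pstar = 0)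
    (g' : ℝ) (hgd : HasDerivAt g g' pstar) (hg' : 0 < g') :
    (∀ p ∈ I, p ≠ pstar →
      UL w₁ w₂ Etl E n d nsrx Qsum g p < UL w₁ w₂ Etl E n d nsrx Qsum g pstar) ∧
    pstar ^ 2 * (w₁ * d ^ 3 * E * nsrx -
        (4 * Real.pi * n * w₂ * Etl) * (g pstar) ^ 2 * g') =
      w₂ * d ^ 3 * Etl * nsrx * Qsum := by
  have hF : StrictConcaveOn ℝ I (fun p => (g p) ^ 3) :=
    gcube_strictConcaveOn A a k Q₀ hA ha hk g hgQ hgmono I hIsub hIconv hg2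
  have hIpos : I ⊆ Set.Ioi (0:ℝ) := fun x hx => lt_of_le_of_lt hQ₀ (hIsub hx)
  have hp0 : (0:ℝ) < pstar := hIpos hpI
  have hpi : (0:ℝ) < Real.pi := Real.pi_pos
  set C : ℝ := 4 * Real.pi * n / (3 * d ^ 3 * nsrx) with hCdef
  have hC : 0 < C := by positivity
  -- strict concavity of UL on I
  have hSC : StrictConcaveOn ℝ I (UL w₁ w₂ Etl E n d nsrx Qsum g) := by
    have hf2 : StrictConcaveOn ℝ I (fun p => (w₂ * C) * (g p) ^ 3) :=
      mySCsmul (mul_pos hw₂.1 hC) hF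
    have hf3 : ConcaveOn ℝ I (fun p : ℝ => -((w₂ * Qsum) • p ^ (-1 : ℤ))) :=
      (((convexOn_zpow (-1)).smul (mul_pos hw₂.1 hQsum).le).neg).subset hIpos hIconv
    have hf1 : ConcaveOn ℝ I (fun p => w₁ * (Etl - E * p) / Etl) := by
      refine ⟨hIconv, fun x hx y hy a b ha hb hab => ?_⟩
      apply le_of_eq
      simp only [smul_eq_mul]
      field_simp
      linear_combination (w₁ * Etl) * hab
    have hsum : StrictConcaveOn ℝ I
        (fun p => (w₁ * (Etl - E * p) / Etl) +
          ((fun p => (w₂ * C) * (g p) ^ 3) p + (fun p : ℝ => -((w₂ * Qsum) • p ^ (-1 : ℤ))) p)) :=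
      hf1.add_strictConcaveOn (hf2.add_concaveOn hf3)
    apply mySCcongr hsum
    intro x hx
    have hx0 : (0:ℝ) < x := hIpos hx
    simp only [UL, smul_eq_mul, zpow_neg, zpow_one, div_eq_mul_inv]
    ring
  -- derivative of UL at pstar
  have hULeq : UL w₁ w₂ Etl E n d nsrx Qsum g =
      fun p => w₁ * (Etl - E * p) / Etl + w₂ * (C * (g p) ^ 3 - Qsum * p⁻¹) := by
    funext p; simp [UL, div_eq_mul_inv, hCdef]
  have hin : HasDerivAt (fun p : ℝ => Etl - E * p) (-(E * 1)) pstar :=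
    ((hasDerivAt_id pstar).const_mul E).const_sub Etl
  have ht1 : HasDerivAt (fun p : ℝ => w₁ * (Etl - E * p) / Etl) (w₁ * -(E * 1) / Etl) pstar :=
    (hin.const_mul w₁).div_const Etl
  have ht2a : HasDerivAt (fun p => (g p) ^ 3) ((3:ℕ) * (g pstar) ^ 2 * g') pstar := by
    simpa using hgd.fun_pow 3
  have ht2b : HasDerivAt (fun p : ℝ => p⁻¹) (-(pstar ^ 2)⁻¹) pstar := hasDerivAt_inv hp0.ne'
  have ht2 : HasDerivAt (fun p : ℝ => w₂ * (C * (g p) ^ 3 - Qsum * p⁻¹))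
      (w₂ * (C * ((3:ℕ) * (g pstar) ^ 2 * g') - Qsum * -(pstar ^ 2)⁻¹)) pstar :=
    ((ht2a.const_mul C).sub (ht2b.const_mul Qsum)).const_mul w₂
  have hD : HasDerivAt (UL w₁ w₂ Etl E n d nsrx Qsum g)
      (-(w₁ * E) / Etl + w₂ * (C * (3 * (g pstar) ^ 2 * g') + Qsum / pstar ^ 2)) pstar := by
    rw [hULeq]
    refine (ht1.add ht2).congr_deriv ?_
    have : (pstar:ℝ) ^ 2 ≠ 0 := by positivity
    push_cast
    field_simp
    ring
  have hD0 : -(w₁ * E) / Etl + w₂ * (C * (3 * (g pstar) ^ 2 * g') + Qsum / pstar ^ 2) = 0 := by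
    rw [← hD.deriv]; exact hcrit
  have hd0' : HasDerivAt (UL w₁ w₂ Etl E n d nsrx Qsum g) 0 pstar := hD0 ▸ hD
  constructor
  · intro p hp hne
    rcases lt_or_gt_of_ne hne with hlt | hgt
    · have h := hSC.lt_slope_of_hasDerivAt hp hpI hlt hd0'
      rw [slope_def_field] at h
      have hY : (0:ℝ) < pstar - p := by linarith
      have h2 := mul_pos h hY
      rw [div_mul_cancel₀ _ hY.ne'] at h2
      linarith
    · have h := hSC.slope_lt_of_hasDerivAt hpI hp hgt hd0'
      rw [slope_def_field] at h
      have hY : (0:ℝ) < p - pstar := by linarith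
      have h2 := mul_neg_of_neg_of_pos h hY
      rw [div_mul_cancel₀ _ hY.ne'] at h2
      linarith
  · rw [hCdef] at hD0
    field_simp at hD0
    linear_combination (-1 : ℝ) * hD0
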